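/- Let R be a commutative ring with 1 and τ a symmetric relation on R^# that is refinable and associate preserving. If R is a τ-atomic-associate-UFR, then R is a τ-associate-FFR (every nonunit has only finitely many nontrivial τ-factorizations up to rearrangement and associates of the factors). -/

import Mathlib

universe u

variable {R : Type u} [CommRing R]

/-- `a ∈ R^#`, i.e. `a` is a nonzero nonunit of `R`. -/
def IsNnu (a : R) : Prop :=
  a ≠ 0 ∧ ¬IsUnit a

/-- `a ∼ b` iff `(a) = (b)`. -/
def RAssoc (a b : R) : Prop :=
  Ideal.span ({a} : Set R) = Ideal.span ({b} : Set R)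

/-- `a ≈ b` iff `a = λ * b` for some unit `λ`. -/
def RSAssoc (a b : R) : Prop :=
  ∃ lam : Rˣ, a = (lam : R) * b

/-- `a ≅ b` iff `a ∼ b` and (`a = b = 0`, or whenever `a = r * b` then `r` is a unit). -/
def RVSAssoc (a b : R) : Prop :=
  RAssoc a b ∧ ((a = 0 ∧ b = 0) ∨ ∀ r : R, a = r * b → IsUnit r)

/-- `a = u * a₁ ⋯ aₙ` (with `l = [a₁, …, aₙ]`) is a `τ`-factorization of `a`:
the list of factors is nonempty, all factors are nonunits, all factors are nonzero
except in the trivial `τ`-factorization `0 = u * 0` of `0`, and the factors are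
pairwise related by `τ`. -/
def IsTauFact (τ : R → R → Prop) (u : Rˣ) (l : List R) (a : R) : Prop :=
  l ≠ [] ∧ (∀ x ∈ l, ¬IsUnit x) ∧ (∀ x ∈ l, x = 0 → l = [0]) ∧
    l.Pairwise τ ∧ a = (u : R) * l.prod

/-- `b` τ-divides `a`, i.e. `b` occurs as a factor in some τ-factorization of `a`. -/
def TauDvd (τ : R → R → Prop) (b a : R) : Prop :=
  ∃ (u : Rˣ) (l : List R), IsTauFact τ u l a ∧ b ∈ l

/-- `a` is τ-irreducible: `a` is a nonunit and every τ-factorization of `a`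
has a factor `∼ a`. -/
def TauIrreducible (τ : R → R → Prop) (a : R) : Prop :=
  ¬IsUnit a ∧ ∀ (u : Rˣ) (l : List R), IsTauFact τ u l a → ∃ x ∈ l, RAssoc a x

/-- `a` is τ-strongly irreducible: `a` is a nonunit and every τ-factorization of `a`
has a factor `≈ a`. -/
def TauSIrreducible (τ : R → R → Prop) (a : R) : Prop :=
  ¬IsUnit a ∧ ∀ (u : Rˣ) (l : List R), IsTauFact τ u l a → ∃ x ∈ l, RSAssoc a x

/-- `a` is τ-m-irreducible: `a` is a nonunit and in every τ-factorization of `a`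
every factor is `∼ a`. -/
def TauMIrreducible (τ : R → R → Prop) (a : R) : Prop :=
  ¬IsUnit a ∧ ∀ (u : Rˣ) (l : List R), IsTauFact τ u l a → ∀ x ∈ l, RAssoc a x

/-- `a` is τ-very strongly irreducible: `a` is a nonunit, `a ≅ a`, and `a` has
no nontrivial τ-factorizations. -/
def TauVSIrreducible (τ : R → R → Prop) (a : R) : Prop :=
  ¬IsUnit a ∧ RVSAssoc a a ∧ ∀ (u : Rˣ) (l : List R), IsTauFact τ u l a → l.length = 1

/-- `R` is τ-atomic: every nonunit has a τ-factorization into τ-irreducible factors. -/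
def TauAtomic (τ : R → R → Prop) : Prop :=
  ∀ a : R, ¬IsUnit a → ∃ (u : Rˣ) (l : List R),
    IsTauFact τ u l a ∧ ∀ x ∈ l, TauIrreducible τ x

/-- `τ` is refinable: replacing each factor of a τ-factorization by the factors of a
τ-factorization of it (absorbing the units into the leading unit) again yields a
τ-factorization. -/
def TauRefinable (τ : R → R → Prop) : Prop :=
  ∀ (a : R) (u : Rˣ) (l : List R), IsTauFact τ u l a →
    ∀ L : List (Rˣ × List R),
      List.Forall₂ (fun x p => IsTauFact τ p.1 p.2 x) l L →
      IsTauFact τ (u * (L.map Prod.fst).prod) (L.map Prod.snd).flatten a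

/-- `τ` is associate preserving. -/
def TauAssocPreserving (τ : R → R → Prop) : Prop :=
  ∀ a b b' : R, IsNnu b' → RAssoc b b' → τ a b → τ a b'

/-- `R` satisfies τ-ACCP: every ascending chain of principal ideals
`(a₀) ⊆ (a₁) ⊆ ⋯` with `a_{i+1} |_τ a_i` stabilizes. -/
def TauACCP (τ : R → R → Prop) : Prop :=
  ∀ f : ℕ → R,
    (∀ i, Ideal.span ({f i} : Set R) ≤ Ideal.span ({f (i + 1)} : Set R)) →
    (∀ i, TauDvd τ (f (i + 1)) (f i)) →
    ∃ N : ℕ, ∀ i, N ≤ i → Ideal.span ({f i} : Set R) = Ideal.span ({f N} : Set R)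


private lemma rassoc_mul {a b c d : R} (h1 : RAssoc a b) (h2 : RAssoc c d) :
    RAssoc (a * c) (b * d) := by
  unfold RAssoc at *
  rw [← Ideal.span_singleton_mul_span_singleton, ← Ideal.span_singleton_mul_span_singleton,
    h1, h2]

private lemma rassoc_prod {m n : Multiset R} (h : Multiset.Rel RAssoc m n) :
    RAssoc m.prod n.prod := by
  induction h with
  | zero => rfl
  | cons hab h ih =>
      rw [Multiset.prod_cons, Multiset.prod_cons]
      exact rassoc_mul hab ih

private lemma exists_forall₂ {α β : Type*} {Q : α → β → Prop} :
    ∀ l : List α, (∀ x ∈ l, ∃ y, Q x y) → ∃ L : List β, List.Forall₂ Q l L := by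
  intro l
  induction l with
  | nil => exact fun _ => ⟨[], List.Forall₂.nil⟩
  | cons a l ih =>
      intro h
      obtain ⟨y, hy⟩ := h a List.mem_cons_self
      obtain ⟨L, hL⟩ := ih fun x hx => h x (List.mem_cons_of_mem a hx)
      exact ⟨y :: L, List.Forall₂.cons hy hL⟩

private lemma forall₂_mem_left {α β : Type*} {Q : α → β → Prop} {l : List α} {L : List β}
    (h : List.Forall₂ Q l L) {x : α} (hx : x ∈ l) : ∃ p ∈ L, Q x p := by
  induction h with
  | nil => simp at hx
  | cons hq hf ih =>
      rcases List.mem_cons.1 hx with rfl | hx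
      · exact ⟨_, List.mem_cons_self, hq⟩
      · obtain ⟨p, hp, hqp⟩ := ih hx
        exact ⟨p, List.mem_cons_of_mem _ hp, hqp⟩

private lemma forall₂_mem_right {α β : Type*} {Q : α → β → Prop} {l : List α} {L : List β}
    (h : List.Forall₂ Q l L) {p : β} (hp : p ∈ L) : ∃ x ∈ l, Q x p := by
  induction h with
  | nil => simp at hp
  | cons hq hf ih =>
      rcases List.mem_cons.1 hp with rfl | hp
      · exact ⟨_, List.mem_cons_self, hq⟩
      · obtain ⟨x, hx, hqx⟩ := ih hp
        exact ⟨x, List.mem_cons_of_mem _ hx, hqx⟩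

private lemma rel_of_forall₂ {α β : Type*} {Q : α → β → Prop} {l : List α} {L : List β}
    (h : List.Forall₂ Q l L) : Multiset.Rel Q (↑l) (↑L) := by
  induction h with
  | nil => exact Multiset.Rel.zero
  | cons hq _ ih => exact Multiset.Rel.cons hq ih

private lemma rel_of_le {α β : Type*} {r : α → β → Prop} {m' m : Multiset α} {n : Multiset β}
    (hle : m' ≤ m) (h : Multiset.Rel r m n) : ∃ n' ≤ n, Multiset.Rel r m' n' := by
  obtain ⟨d, rfl⟩ := Multiset.le_iff_exists_add.1 hle
  obtain ⟨n₁, n₂, h₁, _, hn⟩ := Multiset.rel_add_left.1 h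
  exact ⟨n₁, hn ▸ Multiset.le_add_right _ _, h₁⟩

/-- For `τ` refinable and associate preserving: if `R` is a τ-atomic-associate-UFR,
then `R` is a τ-associate-FFR (every nonunit has only finitely many nontrivial
τ-factorizations up to rearrangement and associates of the factors). -/
theorem tau_UFR_implies_FFR (τ : R → R → Prop)
    (hτ : ∀ a b : R, τ a b → IsNnu a ∧ IsNnu b)
    (hsym : ∀ a b : R, τ a b → τ b a)
    (href : TauRefinable τ) (hap : TauAssocPreserving τ)
    (hatomic : TauAtomic τ)
    (hufr : ∀ a : R, ¬IsUnit a → ∀ (u u' : Rˣ) (l l' : List R),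
      IsTauFact τ u l a → (∀ x ∈ l, TauIrreducible τ x) →
      IsTauFact τ u' l' a → (∀ x ∈ l', TauIrreducible τ x) →
      Multiset.Rel RAssoc (↑l : Multiset R) (↑l' : Multiset R)) :
    ∀ a : R, ¬IsUnit a → ∃ F : Finset (Multiset R),
      ∀ (u : Rˣ) (l : List R), IsTauFact τ u l a → 1 < l.length →
        ∃ s ∈ F, Multiset.Rel RAssoc (↑l) s := by
  intro a ha
  classical
  obtain ⟨u₀, l₀, hfact₀, hirr₀⟩ := hatomic a ha
  set n := l₀.length with hn
  set T : Finset R := (l₀.sublists.map List.prod).toFinset with hT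
  refine ⟨((n • T.val).powerset).toFinset, ?_⟩
  intro u l hfl _
  -- refine each factor into atoms
  have hchoose : ∀ x ∈ l, ∃ p : Rˣ × List R,
      IsTauFact τ p.1 p.2 x ∧ ∀ y ∈ p.2, TauIrreducible τ y := by
    intro x hx
    obtain ⟨ux, mx, h1, h2⟩ := hatomic x (hfl.2.1 x hx)
    exact ⟨(ux, mx), h1, h2⟩
  obtain ⟨L, hL⟩ := exists_forall₂ l hchoose
  have hLfact : List.Forall₂ (fun x p => IsTauFact τ p.1 p.2 x) l L :=
    hL.imp fun _ _ h => h.1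
  have hflat := href a u l hfl L hLfact
  set fl := (L.map Prod.snd).flatten with hfldef
  have hirr_fl : ∀ y ∈ fl, TauIrreducible τ y := by
    intro y hy
    obtain ⟨piece, hpiece, hypc⟩ := List.mem_flatten.1 hy
    obtain ⟨p, hpL, rfl⟩ := List.mem_map.1 hpiece
    -- find the x paired with p
    obtain ⟨x, _, _, h2⟩ := forall₂_mem_right hL hpL
    exact h2 y hypc
  have hrel : Multiset.Rel RAssoc (fl : Multiset R) (l₀ : Multiset R) :=
    hufr a ha _ u₀ fl l₀ hflat hirr_fl hfact₀ hirr₀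
  have hcard : fl.length = n := by
    have := Multiset.card_eq_card_of_rel hrel
    simpa using this
  -- length bound
  have hlen_le : l.length ≤ n := by
    rw [← hcard, hfldef, List.length_flatten]
    have hLl : L.length = l.length := (List.Forall₂.length_eq hLfact).symm
    rw [← hLl]
    have : ∀ k ∈ (L.map Prod.snd).map List.length, 1 ≤ k := by
      intro k hk
      obtain ⟨piece, hpiece, rfl⟩ := List.mem_map.1 hk
      obtain ⟨p, hpL, rfl⟩ := List.mem_map.1 hpiece
      obtain ⟨x, _, hfx, _⟩ := forall₂_mem_right hL hpL
      exact List.length_pos_iff.2 hfx.1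
    calc L.length = ((L.map Prod.snd).map List.length).length := by simp
      _ ≤ ((L.map Prod.snd).map List.length).sum := List.length_le_sum_of_one_le _ this
      _ = (List.map List.length (List.map Prod.snd L)).sum := rfl
  -- each factor is associate to a product of a sublist of l₀
  have hex : ∀ x ∈ l, ∃ t, t ∈ T ∧ RAssoc x t := by
    intro x hx
    obtain ⟨p, hpL, hfx, _⟩ := forall₂_mem_left hL hx
    have hsub : (↑p.2 : Multiset R) ≤ ↑fl := by
      rw [Multiset.coe_le]
      exact (List.sublist_flatten_of_mem (List.mem_map_of_mem (f := Prod.snd) hpL)).subperm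
    obtain ⟨m, hmle, hmrel⟩ := rel_of_le hsub hrel
    -- m.prod ∈ T
    obtain ⟨lm, rfl⟩ := Quotient.exists_rep m
    obtain ⟨sl, hslperm, hslsub⟩ := Multiset.coe_le.1 hmle
    have hmem : Multiset.prod (↑lm : Multiset R) ∈ T := by
      rw [hT, List.mem_toFinset, List.mem_map]
      refine ⟨sl, List.mem_sublists.2 hslsub, ?_⟩
      rw [Multiset.prod_coe]
      exact hslperm.prod_eq
    refine ⟨_, hmem, ?_⟩
    have h1 : RAssoc x (List.prod p.2) := by
      have := hfx.2.2.2.2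
      unfold RAssoc
      rw [this, Ideal.span_singleton_mul_left_unit p.1.isUnit]
    have h2 : RAssoc (Multiset.prod (↑p.2 : Multiset R)) (Multiset.prod (↑lm : Multiset R)) :=
      rassoc_prod hmrel
    rw [Multiset.prod_coe] at h2
    exact h1.trans h2
  obtain ⟨s, hs⟩ := exists_forall₂ l fun x hx =>
    (hex x hx).imp fun t ht => ht
  have hsT : ∀ t ∈ s, t ∈ T := by
    intro t ht
    obtain ⟨x, _, hxt⟩ := forall₂_mem_right hs ht
    exact hxt.1
  refine ⟨↑s, ?_, ?_⟩
  · rw [Multiset.mem_toFinset, Multiset.mem_powerset]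
    rw [Multiset.le_iff_count]
    intro b
    rw [Multiset.count_nsmul]
    by_cases hb : b ∈ s
    · have hbT : Multiset.count b T.val = 1 :=
        Multiset.count_eq_one_of_mem T.nodup (hsT b hb)
      rw [hbT, mul_one]
      calc Multiset.count b (↑s : Multiset R) ≤ Multiset.card (↑s : Multiset R) :=
            Multiset.count_le_card _ _
        _ = s.length := Multiset.coe_card s
        _ = l.length := (hs.length_eq).symm
        _ ≤ n := hlen_le
    · simp [Multiset.count_eq_zero_of_notMem, hb]
  · exact rel_of_forall₂ (hs.imp fun _ _ h => h.2)
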